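/- In the setting of the previous statement, the curvature vector of γ₁ is lightlike (⟨γ₁'', γ₁''⟩ = 0) if and only if κλ₁ = k₁, where κ = k₁ + k₂, k₁ = −1/r₁², k₂ = −1/r₂². -/

import Mathlib

open Real

lemma dd_cosh (a c : ℝ) (s : ℝ) :
    deriv (deriv (fun u => a * Real.cosh (u / c))) s = a / c ^ 2 * Real.cosh (s / c) := by
  have h1 : deriv (fun u => a * Real.cosh (u / c)) = fun u => a / c * Real.sinh (u / c) := by
    funext x
    have h : HasDerivAt (fun u : ℝ => a * Real.cosh (u / c)) (a / c * Real.sinh (x / c)) x := by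
      have := (((hasDerivAt_id x).div_const c).cosh).const_mul a
      exact this.congr_deriv (by simp only [id_eq]; ring)
    exact h.deriv
  rw [h1]
  have h : HasDerivAt (fun u : ℝ => a / c * Real.sinh (u / c)) (a / c ^ 2 * Real.cosh (s / c)) s := by
    have := (((hasDerivAt_id s).div_const c).sinh).const_mul (a / c)
    exact this.congr_deriv (by simp only [id_eq]; ring)
  exact h.deriv

lemma dd_sinh (a c : ℝ) (s : ℝ) :
    deriv (deriv (fun u => a * Real.sinh (u / c))) s = a / c ^ 2 * Real.sinh (s / c) := by
  have h1 : deriv (fun u => a * Real.sinh (u / c)) = fun u => a / c * Real.cosh (u / c) := by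
    funext x
    have h : HasDerivAt (fun u : ℝ => a * Real.sinh (u / c)) (a / c * Real.cosh (x / c)) x := by
      have := (((hasDerivAt_id x).div_const c).sinh).const_mul a
      exact this.congr_deriv (by simp only [id_eq]; ring)
    exact h.deriv
  rw [h1]
  have h : HasDerivAt (fun u : ℝ => a / c * Real.cosh (u / c)) (a / c ^ 2 * Real.sinh (s / c)) s := by
    have := (((hasDerivAt_id s).div_const c).cosh).const_mul (a / c)
    exact this.congr_deriv (by simp only [id_eq]; ring)
  exact h.deriv

lemma dd_cos (a d : ℝ) (s : ℝ) :
    deriv (deriv (fun u => a * Real.cos (u / d))) s = -(a / d ^ 2) * Real.cos (s / d) := by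
  have h1 : deriv (fun u => a * Real.cos (u / d)) = fun u => -(a / d) * Real.sin (u / d) := by
    funext x
    have h : HasDerivAt (fun u : ℝ => a * Real.cos (u / d)) (-(a / d) * Real.sin (x / d)) x := by
      have := (((hasDerivAt_id x).div_const d).cos).const_mul a
      exact this.congr_deriv (by simp only [id_eq]; ring)
    exact h.deriv
  rw [h1]
  have h : HasDerivAt (fun u : ℝ => -(a / d) * Real.sin (u / d)) (-(a / d ^ 2) * Real.cos (s / d)) s := by
    have := (((hasDerivAt_id s).div_const d).sin).const_mul (-(a / d))
    exact this.congr_deriv (by simp only [id_eq]; ring)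
  exact h.deriv

lemma dd_sin (a d : ℝ) (s : ℝ) :
    deriv (deriv (fun u => a * Real.sin (u / d))) s = -(a / d ^ 2) * Real.sin (s / d) := by
  have h1 : deriv (fun u => a * Real.sin (u / d)) = fun u => (a / d) * Real.cos (u / d) := by
    funext x
    have h : HasDerivAt (fun u : ℝ => a * Real.sin (u / d)) ((a / d) * Real.cos (x / d)) x := by
      have := (((hasDerivAt_id x).div_const d).sin).const_mul a
      exact this.congr_deriv (by simp only [id_eq]; ring)
    exact h.deriv
  rw [h1]
  have h : HasDerivAt (fun u : ℝ => (a / d) * Real.cos (u / d)) (-(a / d ^ 2) * Real.sin (s / d)) s := by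
    have := (((hasDerivAt_id s).div_const d).cos).const_mul (a / d)
    exact this.congr_deriv (by simp only [id_eq]; ring)
  exact h.deriv

theorem gamma1_lightlike_iff (lam₁ lam₂ r₁ r₂ k₁ k₂ κ a₁ a₄ c d : ℝ)
    (hl : 0 < lam₁) (hll : lam₁ < lam₂) (hl1 : lam₂ < 1) (hr₁ : 0 < r₁) (hr₂ : 0 < r₂)
    (hk₁ : k₁ = -1 / r₁ ^ 2) (hk₂ : k₂ = -1 / r₂ ^ 2) (hκ : κ = k₁ + k₂)
    (hc : c ≠ 0) (hd : d ≠ 0)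
    (ha₁ : a₁ ^ 2 = r₁ ^ 2 * (1 - lam₁) / (lam₂ - lam₁))
    (ha₄ : a₄ ^ 2 = r₂ ^ 2 * lam₁ / (lam₂ - lam₁))
    (hc2 : c ^ 2 = r₁ ^ 2 / (lam₂ - lam₁))
    (hd2 : d ^ 2 = r₂ ^ 2 / (lam₂ - lam₁)) (s : ℝ) :
    (-(deriv (deriv (fun u => a₁ * Real.cosh (u / c))) s) ^ 2
      + (deriv (deriv (fun u => a₁ * Real.sinh (u / c))) s) ^ 2
      + (deriv (deriv (fun u => a₄ * Real.cos (u / d))) s) ^ 2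
      + (deriv (deriv (fun u => a₄ * Real.sin (u / d))) s) ^ 2 = 0)
    ↔ κ * lam₁ = k₁ := by
  have hΔ : 0 < lam₂ - lam₁ := by linarith
  have hr₁2 : r₁ ^ 2 ≠ 0 := by positivity
  have hr₂2 : r₂ ^ 2 ≠ 0 := by positivity
  rw [dd_cosh, dd_sinh, dd_cos, dd_sin]
  have key : -(a₁ / c ^ 2 * Real.cosh (s / c)) ^ 2
      + (a₁ / c ^ 2 * Real.sinh (s / c)) ^ 2
      + (-(a₄ / d ^ 2) * Real.cos (s / d)) ^ 2
      + (-(a₄ / d ^ 2) * Real.sin (s / d)) ^ 2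
      = -(a₁ ^ 2 / (c ^ 2) ^ 2) + a₄ ^ 2 / (d ^ 2) ^ 2 := by
    have h1 := Real.cosh_sq_sub_sinh_sq (s / c)
    have h2 := Real.sin_sq_add_cos_sq (s / d)
    linear_combination (-(a₁ ^ 2 / (c ^ 2) ^ 2)) * h1 + (a₄ ^ 2 / (d ^ 2) ^ 2) * h2
  rw [key, ha₁, ha₄, hc2, hd2]
  have hfac : -(r₁ ^ 2 * (1 - lam₁) / (lam₂ - lam₁) / (r₁ ^ 2 / (lam₂ - lam₁)) ^ 2)
      + r₂ ^ 2 * lam₁ / (lam₂ - lam₁) / (r₂ ^ 2 / (lam₂ - lam₁)) ^ 2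
      = ((lam₂ - lam₁) / (r₁ ^ 2 * r₂ ^ 2)) * (lam₁ * r₁ ^ 2 - (1 - lam₁) * r₂ ^ 2) := by
    field_simp
    ring
  rw [hfac]
  have hR : κ * lam₁ - k₁ = (1 / (r₁ ^ 2 * r₂ ^ 2)) * ((1 - lam₁) * r₂ ^ 2 - lam₁ * r₁ ^ 2) := by
    rw [hκ, hk₁, hk₂]
    field_simp
    ring
  constructor
  · intro h
    rcases mul_eq_zero.mp h with h' | h'
    · exfalso
      have : (lam₂ - lam₁) / (r₁ ^ 2 * r₂ ^ 2) > 0 := by positivity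
      linarith
    · have h0 : κ * lam₁ - k₁ = 0 := by
        rw [hR, show (1 - lam₁) * r₂ ^ 2 - lam₁ * r₁ ^ 2
          = -(lam₁ * r₁ ^ 2 - (1 - lam₁) * r₂ ^ 2) by ring, h']
        ring
      linarith
  · intro h
    have h0 : κ * lam₁ - k₁ = 0 := by linarith
    rw [hR] at h0
    have hpos : (0:ℝ) < 1 / (r₁ ^ 2 * r₂ ^ 2) := by positivity
    rcases mul_eq_zero.mp h0 with h' | h'
    · exact absurd h' (ne_of_gt hpos)
    · have : lam₁ * r₁ ^ 2 - (1 - lam₁) * r₂ ^ 2 = 0 := by linarith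
      rw [this, mul_zero]
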